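/- arXiv:2603.19554 — 2 statements merged into one kernel-verified Lean document; each statement's English description precedes it below -/
import Mathlib

section
/- If the set H₁ of Perron numbers of Parry order exactly 1 has no accumulation point in ℝ, then for every integer n ≥ 1 the set H_n of Perron numbers of Parry order exactly n has no accumulation point in ℝ. -/
/-- The β-transformation `x ↦ βx - ⌊βx⌋`. -/
noncomputable def betaT (β : ℝ) (x : ℝ) : ℝ := β * x - ⌊β * x⌋

/-- `β` is a Parry number: `β > 1` and the forward orbit of `1` under the
β-transformation is finite. -/
def IsParry (β : ℝ) : Prop :=
  1 < β ∧ Set.Finite {x : ℝ | ∃ n : ℕ, 1 ≤ n ∧ (betaT β)^[n] 1 = x}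

/-- `β` is a simple Parry number: Parry, and the orbit of `1` hits `0`. -/
def IsSimpleParry (β : ℝ) : Prop :=
  IsParry β ∧ ∃ n : ℕ, 1 ≤ n ∧ (betaT β)^[n] 1 = 0

/-- `β` is a Perron number: a real algebraic integer `β > 1` all of whose Galois
conjugates other than `β` itself have complex absolute value `< β`. -/
def IsPerron (β : ℝ) : Prop :=
  1 < β ∧ IsIntegral ℤ β ∧
    ∀ z : ℂ, Polynomial.aeval z (minpoly ℚ β) = 0 → z ≠ (β : ℂ) → ‖z‖ < β

/-- `β` is a Pisot number. -/
def IsPisot (β : ℝ) : Prop :=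
  1 < β ∧ IsIntegral ℤ β ∧
    ∀ z : ℂ, Polynomial.aeval z (minpoly ℚ β) = 0 → z ≠ (β : ℂ) → ‖z‖ < 1

/-- `β` is a Salem number. -/
def IsSalem (β : ℝ) : Prop :=
  1 < β ∧ IsIntegral ℤ β ∧
    (∀ z : ℂ, Polynomial.aeval z (minpoly ℚ β) = 0 → z ≠ (β : ℂ) → ‖z‖ ≤ 1) ∧
    (∃ z : ℂ, Polynomial.aeval z (minpoly ℚ β) = 0 ∧ ‖z‖ = 1)

/-- `β` has Parry order exactly `n`: if `n ≥ 1` then `β ^ n` is Parry, and no higher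
power of `β` is Parry. -/
def HasParryOrder (β : ℝ) (n : ℕ) : Prop :=
  (1 ≤ n → IsParry (β ^ n)) ∧ ∀ k : ℕ, n < k → ¬ IsParry (β ^ k)

/-- Mahler measure of an algebraic number `β`: product of `max 1 |α|` over the complex
roots `α` of the minimal polynomial of `β` over `ℚ`. -/
noncomputable def mahlerMeasureOf (β : ℝ) : ℝ :=
  (((minpoly ℚ β).map (algebraMap ℚ ℂ)).roots.map (fun z => max 1 ‖z‖)).prod
open IntermediateField in
lemma isPerron_pow {β : ℝ} (hβ : IsPerron β) {n : ℕ} (hn : 1 ≤ n) : IsPerron (β ^ n) := by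
  obtain ⟨h1, hint, hconj⟩ := hβ
  refine ⟨one_lt_pow₀ h1 (by omega), hint.pow n, ?_⟩
  intro w hw hwne
  have hβQ : IsIntegral ℚ β := hint.tower_top
  haveI : FiniteDimensional ℚ ℚ⟮β⟯ := IntermediateField.adjoin.finiteDimensional hβQ
  set b : ℚ⟮β⟯ := IntermediateField.AdjoinSimple.gen ℚ β with hbdef
  have hb : (algebraMap ℚ⟮β⟯ ℝ) b = β := rfl
  have hmin : minpoly ℚ (b ^ n) = minpoly ℚ (β ^ n) := by
    rw [← minpoly.algebraMap_eq (algebraMap ℚ⟮β⟯ ℝ).injective (b ^ n), map_pow, hb]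
  have hminb : minpoly ℚ b = minpoly ℚ β := by
    rw [← minpoly.algebraMap_eq (algebraMap ℚ⟮β⟯ ℝ).injective b, hb]
  have key : w ∈ (minpoly ℚ (b ^ n)).rootSet ℂ := by
    rw [Polynomial.mem_rootSet]
    exact ⟨minpoly.ne_zero ((Algebra.IsIntegral.isIntegral b).pow n), by rwa [hmin]⟩
  rw [← Algebra.IsAlgebraic.range_eval_eq_rootSet_minpoly ℂ (b ^ n)] at key
  obtain ⟨ψ, hψ⟩ := key
  set z : ℂ := ψ b with hz
  have hwz : w = z ^ n := by simp only [map_pow] at hψ; rw [← hψ]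
  have hzroot : Polynomial.aeval z (minpoly ℚ β) = 0 := by
    rw [← hminb, hz, Polynomial.aeval_algHom_apply, minpoly.aeval, map_zero]
  have hzne : z ≠ (β : ℂ) := by
    intro hzb
    apply hwne
    rw [hwz, hzb]; push_cast; ring
  have := hconj z hzroot hzne
  rw [hwz]
  rw [norm_pow]
  exact pow_lt_pow_left₀ this (norm_nonneg z) (by omega)

/-- If `H₁` has no accumulation point in `ℝ`, then every `H_n` (`n ≥ 1`) has no
accumulation point in `ℝ`. -/

theorem H_n_discrete_of_H_one_discrete
    (h : ∀ x : ℝ, ¬ AccPt x (Filter.principal {β : ℝ | IsPerron β ∧ HasParryOrder β 1})) :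
    ∀ n : ℕ, 1 ≤ n →
      ∀ x : ℝ, ¬ AccPt x (Filter.principal {β : ℝ | IsPerron β ∧ HasParryOrder β n}) := by
  intro n hn x hx
  set S := {β : ℝ | IsPerron β ∧ HasParryOrder β n} with hSdef
  set S₁ := {β : ℝ | IsPerron β ∧ HasParryOrder β 1} with hS1def
  rw [accPt_principal_iff_clusterPt, ← mem_closure_iff_clusterPt] at hx
  have hx1 : 1 ≤ x := by
    have hcl : x ∈ closure (Set.Ici (1 : ℝ)) :=
      closure_mono (fun β hβ => (hβ.1.1.1).le) hx
    rwa [isClosed_Ici.closure_eq] at hcl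
  apply h (x ^ n)
  rw [accPt_principal_iff_clusterPt, ← mem_closure_iff_clusterPt]
  rw [mem_closure_iff_nhdsWithin_neBot] at hx ⊢
  have hcont : ContinuousWithinAt (fun t : ℝ => t ^ n) (S \ {x}) x :=
    (continuous_pow n).continuousWithinAt
  have hmaps : Set.MapsTo (fun t : ℝ => t ^ n) (S \ {x}) (S₁ \ {x ^ n}) := by
    rintro β ⟨⟨hP, hO⟩, hβx⟩
    simp only [Set.mem_setOf_eq, Set.mem_diff, Set.mem_singleton_iff] at *
    refine ⟨⟨isPerron_pow hP hn, ?_, ?_⟩, ?_⟩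
    · intro _
      rw [pow_one]
      exact hO.1 hn
    · intro k hk
      rw [← pow_mul]
      refine hO.2 (n * k) ?_
      calc n = n * 1 := (mul_one n).symm
        _ < n * k := by nlinarith
    · intro he
      exact hβx ((pow_left_strictMonoOn₀ (by omega : n ≠ 0)).injOn
        (by exact le_trans zero_le_one hP.1.le) (by exact le_trans zero_le_one hx1) he)
  exact (hx.map _).mono (hcont.tendsto_nhdsWithin hmaps)
end

section
/- Let β be a Perron number of degree 3 over ℚ whose two Galois conjugates other than β are non-real complex conjugates γ and γ̄. If |γ| < 1, then β is a Pisot number. If |γ| > 1, then β^n is not a Parry number for any integer n ≥ 1, i.e. β has Parry order 0. -/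
open Polynomial IntermediateField


lemma cubic_aux_roots_desc (β : ℝ) (hβ : IsPerron β) (hdeg : (minpoly ℚ β).natDegree = 3)
    (γ : ℂ) (him : γ.im ≠ 0) (hroot : Polynomial.aeval γ (minpoly ℚ β) = 0) :
    ((minpoly ℚ β).map (algebraMap ℚ ℂ)).roots
      = {(β:ℂ), γ, (starRingEnd ℂ) γ} := by
  have hint : IsIntegral ℚ β := IsIntegral.tower_top (A := ℚ) hβ.2.1
  set p := minpoly ℚ β with hp
  have hp0 : p ≠ 0 := minpoly.ne_zero hint
  have hmap0 : p.map (algebraMap ℚ ℂ) ≠ 0 := by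
    simpa using (Polynomial.map_ne_zero_iff (algebraMap ℚ ℂ).injective).2 hp0
  -- conj γ is a root
  have hrootc : Polynomial.aeval ((starRingEnd ℂ) γ) p = 0 := by
    have := Polynomial.aeval_algHom_apply
      ((Complex.conjAe.restrictScalars ℚ).toAlgHom) γ p
    have h2 : ((Complex.conjAe.restrictScalars ℚ).toAlgHom) γ = (starRingEnd ℂ) γ := rfl
    rw [h2] at this
    rw [this, hroot, map_zero]
  -- β is a root
  have hrootβ : Polynomial.aeval ((β:ℂ)) p = 0 := by
    have h := minpoly.aeval ℚ β
    have h2 := Polynomial.aeval_algebraMap_apply (A := ℝ) ℂ β p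
    have h3 : (algebraMap ℝ ℂ) β = ((β:ℝ):ℂ) := rfl
    rw [h3] at h2
    rw [h2, h, map_zero]
  have hmem : ∀ z : ℂ, Polynomial.aeval z p = 0 → z ∈ (p.map (algebraMap ℚ ℂ)).roots := by
    intro z hz
    rw [Polynomial.mem_roots hmap0, Polynomial.IsRoot, Polynomial.eval_map,
      ← Polynomial.aeval_def]
    exact hz
  have hne1 : (β:ℂ) ≠ γ := by
    intro h; apply him; rw [← h]; simp
  have hne2 : (β:ℂ) ≠ (starRingEnd ℂ) γ := by
    intro h; apply him
    have : ((starRingEnd ℂ) γ).im = 0 := by rw [← h]; simp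
    simpa [Complex.conj_im, neg_eq_zero] using this
  have hne3 : γ ≠ (starRingEnd ℂ) γ := by
    intro h; apply him
    have := congrArg Complex.im h
    simp only [Complex.conj_im] at this
    linarith
  have hsub : ({(β:ℂ), γ, (starRingEnd ℂ) γ} : Multiset ℂ) ≤ (p.map (algebraMap ℚ ℂ)).roots := by
    have h1 := hmem _ hrootβ
    have h2 := hmem _ hroot
    have h3 := hmem _ hrootc
    rw [← Multiset.cons_erase h1]
    have h2' : γ ∈ ((p.map (algebraMap ℚ ℂ)).roots).erase (β:ℂ) :=
      Multiset.mem_erase_of_ne (fun h => hne1 h.symm) |>.2 h2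
    have h3' : (starRingEnd ℂ) γ ∈ ((p.map (algebraMap ℚ ℂ)).roots).erase (β:ℂ) :=
      Multiset.mem_erase_of_ne (fun h => hne2 h.symm) |>.2 h3
    refine Multiset.cons_le_cons _ ?_
    rw [← Multiset.cons_erase h2']
    refine Multiset.cons_le_cons _ ?_
    have : (starRingEnd ℂ) γ ∈ (((p.map (algebraMap ℚ ℂ)).roots).erase (β:ℂ)).erase γ :=
      Multiset.mem_erase_of_ne (fun h => hne3 h.symm) |>.2 h3'
    exact Multiset.singleton_le.2 this
  have hcard : Multiset.card (p.map (algebraMap ℚ ℂ)).roots = 3 := by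
    have := (IsAlgClosed.splits (p.map (algebraMap ℚ ℂ))).natDegree_eq_card_roots
    rw [Polynomial.natDegree_map] at this
    omega
  exact (Multiset.eq_of_le_of_card_le hsub (by rw [hcard]; rfl)).symm

lemma cubic_aux_not_parry (α : ℝ) (hα1 : 1 < α) (hint : IsIntegral ℤ α)
    (hbig : α < |(((minpoly ℤ α).eval 0 : ℤ) : ℝ)|) : ¬ IsParry α := by
  classical
  rintro ⟨-, hfin⟩
  set t : ℕ → ℝ := fun k => (betaT α)^[k] 1 with ht
  set d : ℕ → ℤ := fun k => ⌊α * t k⌋ with hd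
  have ht0 : t 0 = 1 := rfl
  have hstep : ∀ k, t (k + 1) = α * t k - (d k : ℝ) := by
    intro k
    simp only [ht, Function.iterate_succ_apply']
    rfl
  have hfr : ∀ k, t (k + 1) = Int.fract (α * t k) := by
    intro k; rw [hstep k, Int.fract]
  have ht01 : ∀ k, 0 ≤ t k ∧ t k ≤ 1 := by
    intro k
    cases k with
    | zero => norm_num [ht0]
    | succ k =>
      rw [hfr k]
      exact ⟨Int.fract_nonneg _, le_of_lt (Int.fract_lt_one _)⟩
  have htlt1 : ∀ k, t (k + 1) < 1 := fun k => by rw [hfr k]; exact Int.fract_lt_one _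
  have hd0 : ∀ k, 0 ≤ d k :=
    fun k => Int.floor_nonneg.2 (mul_nonneg (by linarith) (ht01 k).1)
  have hdle : ∀ k, d k ≤ ⌊α⌋ := by
    intro k
    apply Int.floor_le_floor
    nlinarith [(ht01 k).1, (ht01 k).2]
  -- key expansion
  have hsum : ∀ m, t m = α ^ m - ∑ j ∈ Finset.range m, (d j : ℝ) * α ^ (m - 1 - j) := by
    intro m
    induction m with
    | zero => simp [ht0]
    | succ m ih =>
      rw [hstep m, ih, Finset.sum_range_succ]
      have hmul : ∀ j ∈ Finset.range m,
          α * ((d j : ℝ) * α ^ (m - 1 - j)) = (d j : ℝ) * α ^ (m + 1 - 1 - j) := by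
        intro j hj
        rw [Finset.mem_range] at hj
        have : m + 1 - 1 - j = (m - 1 - j) + 1 := by omega
        rw [this, pow_succ]; ring
      have hS : α * ∑ j ∈ Finset.range m, (d j : ℝ) * α ^ (m - 1 - j)
          = ∑ j ∈ Finset.range m, (d j : ℝ) * α ^ (m + 1 - 1 - j) := by
        rw [Finset.mul_sum]; exact Finset.sum_congr rfl hmul
      rw [show m + 1 - 1 - m = 0 by omega, ← hS, pow_zero, pow_succ]
      ring
  -- pigeonhole
  have hninj : ¬ Function.Injective (fun k : ℕ => t (k + 1)) := by
    intro hinj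
    have hmem : ∀ k : ℕ, t (k + 1) ∈ {x : ℝ | ∃ n, 1 ≤ n ∧ (betaT α)^[n] 1 = x} :=
      fun k => ⟨k + 1, by omega, rfl⟩
    exact (Set.infinite_of_injective_forall_mem hinj hmem) hfin
  rw [Function.not_injective_iff] at hninj
  obtain ⟨a, b, hab, hne⟩ := hninj
  have hQ : ∃ p, 1 ≤ p ∧ ∃ q, 1 ≤ q ∧ t (p + q) = t p := by
    rcases Nat.lt_or_ge a b with h | h
    · exact ⟨a + 1, by omega, b - a, by omega, by rw [show a + 1 + (b - a) = b + 1 by omega]; exact hab.symm⟩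
    · have h' : b < a := by omega
      exact ⟨b + 1, by omega, a - b, by omega, by rw [show b + 1 + (a - b) = a + 1 by omega]; exact hab⟩
  set p := Nat.find hQ with hp
  obtain ⟨hp1, q, hq1, heq⟩ := Nat.find_spec hQ
  rw [← hp] at hp1 heq
  have hdne : d (p - 1) ≠ d (p - 1 + q) := by
    intro h
    have e1 : t (p + q) = α * t (p - 1 + q) - (d (p - 1 + q) : ℝ) := by
      rw [show p + q = (p - 1 + q) + 1 by omega] at heq ⊢
      exact hstep _
    have e2 : t p = α * t (p - 1) - (d (p - 1) : ℝ) := by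
      rw [show p = (p - 1) + 1 by omega] at heq ⊢
      exact hstep _
    have : t (p - 1 + q) = t (p - 1) := by
      rw [e1, e2, h] at heq
      have hα0 : α ≠ 0 := by linarith
      exact mul_left_cancel₀ hα0 (by linarith)
    rcases Nat.eq_or_lt_of_le hp1 with h1 | h1
    · -- p = 1 : t q = t 0 = 1 contradiction
      have hq : t q = 1 := by
        rw [show p - 1 + q = q by omega, show p - 1 = 0 by omega, ht0] at this
        exact this
      have := htlt1 (q - 1)
      rw [show q - 1 + 1 = q by omega] at this
      linarith
    · exact Nat.find_min hQ (show p - 1 < p by omega) ⟨by omega, q, hq1, this⟩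
  -- the integer polynomial
  set R : ℤ[X] :=
    (∑ j ∈ Finset.range p, C (d j) * X ^ (p - 1 - j))
      - (∑ j ∈ Finset.range (p + q), C (d j) * X ^ (p + q - 1 - j))
      + X ^ (p + q) - X ^ p with hR
  have haeval : aeval α R = 0 := by
    have h1 := hsum (p + q)
    have h2 := hsum p
    rw [heq] at h1
    simp only [hR, map_add, map_sub, map_sum, map_mul, map_pow, aeval_X, aeval_C,
      algebraMap_int_eq, eq_intCast, map_intCast]
    linarith [h1, h2]
  have heval0 : R.eval 0 = d (p - 1) - d (p + q - 1) := by
    have hs : ∀ (m : ℕ), 1 ≤ m →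
        (∑ j ∈ Finset.range m, C (d j) * X ^ (m - 1 - j)).eval 0 = d (m - 1) := by
      intro m hm
      rw [eval_finset_sum]
      rw [Finset.sum_eq_single (m - 1)]
      · simp [show m - 1 - (m - 1) = 0 by omega]
      · intro j hj hjne
        rw [Finset.mem_range] at hj
        simp [zero_pow (show m - 1 - j ≠ 0 by omega)]
      · intro h
        exact absurd (Finset.mem_range.2 (by omega)) h
    simp only [hR, eval_add, eval_sub, eval_pow, eval_X,
      hs p hp1, hs (p + q) (by omega),
      zero_pow (show p + q ≠ 0 by omega), zero_pow (show p ≠ 0 by omega)]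
    ring
  have hR0ne : R.eval 0 ≠ 0 := by
    rw [heval0, show p + q - 1 = p - 1 + q by omega]
    exact sub_ne_zero.2 hdne
  have hdvd : minpoly ℤ α ∣ R := minpoly.isIntegrallyClosed_dvd hint haeval
  have hdvd0 : (minpoly ℤ α).eval 0 ∣ R.eval 0 := eval_dvd hdvd
  have hle : |(minpoly ℤ α).eval 0| ≤ |R.eval 0| :=
    Int.le_of_dvd (abs_pos.2 hR0ne) ((abs_dvd _ _).2 ((dvd_abs _ _).2 hdvd0))
  have hRle : |R.eval 0| ≤ ⌊α⌋ := by
    rw [heval0]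
    have h1 := hd0 (p - 1); have h2 := hd0 (p + q - 1)
    have h3 := hdle (p - 1); have h4 := hdle (p + q - 1)
    rcases abs_cases (d (p - 1) - d (p + q - 1)) with ⟨h, -⟩ | ⟨h, -⟩ <;> omega
  have : α < α := by
    calc α < |(((minpoly ℤ α).eval 0 : ℤ) : ℝ)| := hbig
    _ = ((|(minpoly ℤ α).eval 0| : ℤ) : ℝ) := by rw [Int.cast_abs]
    _ ≤ ((⌊α⌋ : ℤ) : ℝ) := by exact_mod_cast le_trans hle hRle
    _ ≤ α := Int.floor_le α
  linarith

lemma cubic_aux_abs_multiset_prod (s : Multiset ℂ) :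
    ‖s.prod‖ = (s.map (‖·‖)).prod := by
  induction s using Multiset.induction_on with
  | empty => simp
  | cons a s ih => simp [norm_mul, ih]

lemma cubic_aux_one_le_multiset_prod (s : Multiset ℝ) (h : ∀ x ∈ s, 1 ≤ x) : 1 ≤ s.prod := by
  induction s using Multiset.induction_on with
  | empty => simp
  | cons a s ih =>
    rw [Multiset.prod_cons]
    have h1 := h a (Multiset.mem_cons_self a s)
    have h2 := ih (fun x hx => h x (Multiset.mem_cons_of_mem hx))
    nlinarith


lemma cubic_aux_norm_big (β : ℝ) (hβ : IsPerron β) (hdeg : (minpoly ℚ β).natDegree = 3)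
    (γ : ℂ) (him : γ.im ≠ 0) (hroot : Polynomial.aeval γ (minpoly ℚ β) = 0)
    (hγ : 1 < ‖γ‖) (n : ℕ) (hn : 1 ≤ n) :
    β ^ n < |(((minpoly ℤ (β ^ n : ℝ)).eval 0 : ℤ) : ℝ)| := by
  have hβ1 : 1 < β := hβ.1
  have hβint : IsIntegral ℚ β := IsIntegral.tower_top (A := ℚ) hβ.2.1
  set b : ℂ := (β : ℂ) with hbdef
  have hb : b = algebraMap ℝ ℂ β := rfl
  have hbint : IsIntegral ℚ b := hb ▸ hβint.map (IsScalarTower.toAlgHom ℚ ℝ ℂ)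
  have hmb : minpoly ℚ b = minpoly ℚ β := by
    rw [hb]; exact minpoly.algebraMap_eq Complex.ofReal_injective β
  -- the number field
  haveI : FiniteDimensional ℚ ℚ⟮b⟯ := IntermediateField.adjoin.finiteDimensional hbint
  haveI : NumberField ℚ⟮b⟯ := ⟨⟩
  set b' : ℚ⟮b⟯ := IntermediateField.AdjoinSimple.gen ℚ b with hb'
  have halg : algebraMap ℚ⟮b⟯ ℂ b' = b := rfl
  have hmb' : minpoly ℚ b' = minpoly ℚ β := by
    rw [← hmb]
    have := minpoly.algebraMap_eq (A := ℚ) (algebraMap ℚ⟮b⟯ ℂ).injective b'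
    rw [halg] at this
    exact this.symm
  set α : ℝ := β ^ n with hα
  have hα1 : 1 < α := one_lt_pow₀ hβ1 (by omega)
  have ha : ((α : ℝ) : ℂ) = b ^ n := by push_cast [hα]; ring
  have haint : IsIntegral ℚ α := hβint.pow n
  have hma : minpoly ℚ (b' ^ n) = minpoly ℚ α := by
    have h1 : algebraMap ℚ⟮b⟯ ℂ (b' ^ n) = (α : ℂ) := by rw [map_pow, halg, ha]
    have h2 : minpoly ℚ ((α : ℂ)) = minpoly ℚ α :=
      minpoly.algebraMap_eq Complex.ofReal_injective α
    have h3 := minpoly.algebraMap_eq (A := ℚ) (algebraMap ℚ⟮b⟯ ℂ).injective (b' ^ n)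
    rw [h1] at h3
    rw [← h2, ← h3]
  have hmane : minpoly ℚ α ≠ 0 := minpoly.ne_zero haint
  -- all roots of minpoly of α are n-th powers of roots of minpoly of β
  have hroots := cubic_aux_roots_desc β hβ hdeg γ him hroot
  have hβroot : ∀ v : ℂ, Polynomial.aeval v (minpoly ℚ β) = 0 →
      v = b ∨ v = γ ∨ v = (starRingEnd ℂ) γ := by
    intro v hv
    have hne : (minpoly ℚ β).map (algebraMap ℚ ℂ) ≠ 0 :=
      (Polynomial.map_ne_zero_iff (algebraMap ℚ ℂ).injective).2 (minpoly.ne_zero hβint)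
    have : v ∈ ((minpoly ℚ β).map (algebraMap ℚ ℂ)).roots := by
      rw [Polynomial.mem_roots hne, Polynomial.IsRoot, Polynomial.eval_map,
        ← Polynomial.aeval_def]
      exact hv
    rw [hroots] at this
    simpa using this
  have hpow : ∀ w : ℂ, Polynomial.aeval w (minpoly ℚ α) = 0 →
      ∃ v : ℂ, Polynomial.aeval v (minpoly ℚ β) = 0 ∧ w = v ^ n := by
    intro w hw
    have hw' : w ∈ (minpoly ℚ (b' ^ n)).rootSet ℂ := by
      rw [Polynomial.mem_rootSet, hma]
      exact ⟨hmane, hw⟩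
    rw [← NumberField.Embeddings.range_eval_eq_rootSet_minpoly ℚ⟮b⟯ ℂ] at hw'
    obtain ⟨φ, hφ⟩ := hw'
    have hφ' : φ (b' ^ n) = w := hφ
    refine ⟨φ b', ?_, by rw [← hφ', map_pow]⟩
    have : φ b' ∈ (minpoly ℚ b').rootSet ℂ := by
      rw [← NumberField.Embeddings.range_eval_eq_rootSet_minpoly ℚ⟮b⟯ ℂ]
      exact ⟨φ, rfl⟩
    rw [Polynomial.mem_rootSet] at this
    rw [← hmb']
    exact this.2
  -- γ ^ n is a root of minpoly of α
  have hγroot : Polynomial.aeval (γ ^ n) (minpoly ℚ α) = 0 := by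
    have hγ' : γ ∈ (minpoly ℚ b').rootSet ℂ := by
      rw [Polynomial.mem_rootSet, hmb']
      exact ⟨minpoly.ne_zero hβint, hroot⟩
    rw [← NumberField.Embeddings.range_eval_eq_rootSet_minpoly ℚ⟮b⟯ ℂ] at hγ'
    obtain ⟨φ, hφ⟩ := hγ'
    have hφ' : φ b' = γ := hφ
    have : φ (b' ^ n) ∈ (minpoly ℚ (b' ^ n)).rootSet ℂ := by
      rw [← NumberField.Embeddings.range_eval_eq_rootSet_minpoly ℚ⟮b⟯ ℂ]
      exact ⟨φ, rfl⟩
    rw [Polynomial.mem_rootSet, hma] at this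
    have h4 := this.2
    rw [map_pow, hφ'] at h4
    exact h4
  -- α is a root
  have haroot : Polynomial.aeval ((α : ℂ)) (minpoly ℚ α) = 0 := by
    have h := minpoly.aeval ℚ α
    have h2 := Polynomial.aeval_algebraMap_apply (A := ℝ) ℂ α (minpoly ℚ α)
    have h3 : (algebraMap ℝ ℂ) α = ((α : ℝ) : ℂ) := rfl
    rw [h3] at h2
    rw [h2, h, map_zero]
  -- γ ^ n ≠ α
  have hγβ : ‖γ‖ < β := hβ.2.2 γ hroot (fun h => him (by rw [h]; simp))
  have habs : ‖γ ^ n‖ < α := by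
    rw [norm_pow]
    calc ‖γ‖ ^ n < β ^ n :=
      pow_lt_pow_left₀ hγβ (norm_nonneg γ) (by omega)
    _ = α := rfl
  have hane : (α : ℂ) ≠ γ ^ n := by
    intro h
    rw [← h] at habs
    simp only [Complex.norm_real, Real.norm_eq_abs] at habs
    rw [abs_of_pos (by linarith)] at habs
    linarith
  -- multiset of roots
  set M := ((minpoly ℚ α).map (algebraMap ℚ ℂ)).roots with hM
  have hmapne : (minpoly ℚ α).map (algebraMap ℚ ℂ) ≠ 0 :=
    (Polynomial.map_ne_zero_iff (algebraMap ℚ ℂ).injective).2 hmane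
  have hmemM : ∀ w : ℂ, Polynomial.aeval w (minpoly ℚ α) = 0 → w ∈ M := by
    intro w hw
    rw [hM, Polynomial.mem_roots hmapne, Polynomial.IsRoot, Polynomial.eval_map,
      ← Polynomial.aeval_def]
    exact hw
  have hMroot : ∀ w ∈ M, Polynomial.aeval w (minpoly ℚ α) = 0 := by
    intro w hw
    rw [hM, Polynomial.mem_roots hmapne, Polynomial.IsRoot, Polynomial.eval_map,
      ← Polynomial.aeval_def] at hw
    exact hw
  have hMge1 : ∀ w ∈ M, 1 ≤ ‖w‖ := by
    intro w hw
    obtain ⟨v, hv, rfl⟩ := hpow w (hMroot w hw)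
    have hcon : ‖(starRingEnd ℂ) γ‖ = ‖γ‖ := Complex.norm_conj γ
    have hbabs : ‖b‖ = β := by
      rw [hbdef, Complex.norm_real, Real.norm_eq_abs, abs_of_pos (by linarith)]
    rcases hβroot v hv with h | h | h <;> subst h
    · rw [norm_pow, hbabs]; exact one_le_pow₀ (by linarith)
    · rw [norm_pow]; exact one_le_pow₀ (by linarith)
    · rw [norm_pow, hcon]; exact one_le_pow₀ (by linarith)
  -- product of absolute values of roots
  have haM : (α : ℂ) ∈ M := hmemM _ haroot
  have hgM' : γ ^ n ∈ M.erase ((α:ℂ)) :=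
    (Multiset.mem_erase_of_ne (fun h => hane h.symm)).2 (hmemM _ hγroot)
  have hprod : α * ‖γ‖ ^ n ≤ (M.map (‖·‖)).prod := by
    rw [← Multiset.cons_erase haM, ← Multiset.cons_erase hgM']
    rw [Multiset.map_cons, Multiset.map_cons, Multiset.prod_cons, Multiset.prod_cons]
    have h1 : ‖(α:ℂ)‖ = α := by
      simp only [Complex.norm_real, Real.norm_eq_abs]; exact abs_of_pos (by linarith)
    have h2 : 1 ≤ ((M.erase ((α:ℂ))).erase (γ ^ n) |>.map (‖·‖)).prod := by
      apply cubic_aux_one_le_multiset_prod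
      intro x hx
      rw [Multiset.mem_map] at hx
      obtain ⟨w, hw, rfl⟩ := hx
      exact hMge1 w (Multiset.mem_of_mem_erase (Multiset.mem_of_mem_erase hw))
    rw [h1, norm_pow]
    calc α * ‖γ‖ ^ n = α * (‖γ‖ ^ n * 1) := by ring
    _ ≤ α * (‖γ‖ ^ n * (Multiset.map (‖·‖) ((M.erase ((α:ℂ))).erase (γ ^ n))).prod) := by
        apply mul_le_mul_of_nonneg_left _ (by linarith)
        exact mul_le_mul_of_nonneg_left h2 (pow_nonneg (norm_nonneg γ) n)
  -- relate to the constant term of the integer minimal polynomial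
  have haintZ : IsIntegral ℤ α := hβ.2.1.pow n
  have hmm : minpoly ℚ α = (minpoly ℤ α).map (algebraMap ℤ ℚ) :=
    minpoly.isIntegrallyClosed_eq_field_fractions' ℚ haintZ
  -- compute |constant term|
  have hmonic : ((minpoly ℚ α).map (algebraMap ℚ ℂ)).Monic :=
    (minpoly.monic haint).map _
  have hsplit : Polynomial.Splits ((minpoly ℚ α).map (algebraMap ℚ ℂ)) :=
    IsAlgClosed.splits _
  have hfact := hsplit.eq_prod_roots_of_monic hmonic
  have heval : ‖((minpoly ℚ α).map (algebraMap ℚ ℂ)).eval 0‖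
      = (M.map (‖·‖)).prod := by
    conv_lhs => rw [hfact]
    rw [Polynomial.eval_multiset_prod]
    rw [Multiset.map_map]
    have : Multiset.map ((fun p => Polynomial.eval 0 p) ∘ fun a => X - C a) M
        = Multiset.map (fun a => -a) M := by
      apply Multiset.map_congr rfl
      intro x hx
      simp
    rw [this, cubic_aux_abs_multiset_prod, Multiset.map_map]
    congr 1
    apply Multiset.map_congr rfl
    intro x hx
    simp
  have heval2 : ((minpoly ℚ α).map (algebraMap ℚ ℂ)).eval 0
      = (((minpoly ℤ α).eval 0 : ℤ) : ℂ) := by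
    rw [Polynomial.eval_map, Polynomial.eval₂_at_zero, hmm]
    rw [Polynomial.coeff_map, Polynomial.coeff_zero_eq_eval_zero]
    simp
  have hfinal : α < |(((minpoly ℤ α).eval 0 : ℤ) : ℝ)| := by
    have e1 : ‖(((minpoly ℤ α).eval 0 : ℤ) : ℂ)‖ = |(((minpoly ℤ α).eval 0 : ℤ) : ℝ)| := by
      rw [← Real.norm_eq_abs, ← Complex.norm_real]
      norm_cast
      rw [Int.norm_eq_abs, Int.cast_abs]
    have := heval
    rw [heval2, e1] at this
    have hgt : α < α * ‖γ‖ ^ n := by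
      nlinarith [pow_pos (lt_trans one_pos hγ) n, one_lt_pow₀ hγ (by omega : n ≠ 0)]
    rw [this]
    exact lt_of_lt_of_le hgt hprod
  exact hfinal

/-- A cubic Perron number with a non-real conjugate `γ`: if `|γ| < 1` it is Pisot,
and if `|γ| > 1` then no positive power of it is Parry. -/
theorem cubic_complex_conjugates (β : ℝ) (hβ : IsPerron β)
    (hdeg : (minpoly ℚ β).natDegree = 3)
    (γ : ℂ) (him : γ.im ≠ 0) (hroot : Polynomial.aeval γ (minpoly ℚ β) = 0) :
    (‖γ‖ < 1 → IsPisot β) ∧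
    (1 < ‖γ‖ → ∀ n : ℕ, 1 ≤ n → ¬ IsParry (β ^ n)) := by
  constructor
  · intro hlt
    refine ⟨hβ.1, hβ.2.1, ?_⟩
    intro z hz hne
    have hβint : IsIntegral ℚ β := IsIntegral.tower_top (A := ℚ) hβ.2.1
    have hroots := cubic_aux_roots_desc β hβ hdeg γ him hroot
    have hmapne : (minpoly ℚ β).map (algebraMap ℚ ℂ) ≠ 0 :=
      (Polynomial.map_ne_zero_iff (algebraMap ℚ ℂ).injective).2 (minpoly.ne_zero hβint)
    have hmem : z ∈ ((minpoly ℚ β).map (algebraMap ℚ ℂ)).roots := by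
      rw [Polynomial.mem_roots hmapne, Polynomial.IsRoot, Polynomial.eval_map,
        ← Polynomial.aeval_def]
      exact hz
    rw [hroots] at hmem
    simp only [Multiset.insert_eq_cons, Multiset.mem_cons, Multiset.mem_singleton] at hmem
    rcases hmem with h | h | h
    · exact absurd h hne
    · rw [h]; exact hlt
    · rw [h, Complex.norm_conj]; exact hlt
  · intro hγ n hn
    exact cubic_aux_not_parry (β ^ n) (one_lt_pow₀ hβ.1 (by omega)) (hβ.2.1.pow n)
      (cubic_aux_norm_big β hβ hdeg γ him hroot hγ n hn)
end
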